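/- The labeling λ_{•2}, which assigns to each cover relation of Π_n^• the same label as λ_• but orders the labels in the poset Λ_n^w, is an EL-labeling of the pointed partition poset Π_n^•: every closed interval of Π_n^• contains a unique increasing maximal chain, and this chain lexicographically precedes every other maximal chain of the interval. Consequently Π_n^• is EL-shellable and all its maximal intervals [0̂,[n]^p] are Cohen-Macaulay. -/

import Mathlib

open Finset

open scoped BigOperators Classical

/-! ## Generic machinery for edge labelings of posets presented by cover relations -/

section Chains

variable {α : Type*} {L : Type*}

/-- The word of labels read along a list of poset elements. -/
def wordOf (lab : α → α → L) : List α → List L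
  | x :: y :: rest => lab x y :: wordOf lab (y :: rest)
  | _ => []

/-- `c` is a saturated chain from `x` to `y` with respect to the cover relation `cov`;
in a graded poset these are exactly the maximal chains of the interval `[x, y]`. -/
def IsSatChain (cov : α → α → Prop) (x y : α) (c : List α) : Prop :=
  c.Chain' cov ∧ c.head? = some x ∧ c.getLast? = some y

/-- A word of labels is increasing if consecutive labels strictly increase. -/
def IncWord (lt : L → L → Prop) (w : List L) : Prop := w.Chain' lt

/-- A word of labels is ascent-free if no consecutive pair of labels strictly increases. -/
def AscFree (lt : L → L → Prop) (w : List L) : Prop := w.Chain' fun a b => ¬ lt a b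

/-- The partial order generated by a cover relation. -/
def leOf (cov : α → α → Prop) : α → α → Prop := Relation.ReflTransGen cov

/-- The strict order generated by a cover relation. -/
def ltOf (cov : α → α → Prop) (a b : α) : Prop := leOf cov a b ∧ a ≠ b

/-- An ER-labeling: every closed interval has a unique increasing maximal chain. -/
def IsERLabeling (cov : α → α → Prop) (lab : α → α → L) (lt : L → L → Prop) : Prop :=
  ∀ x y, leOf cov x y → ∃! c, IsSatChain cov x y c ∧ IncWord lt (wordOf lab c)

/-- The rank two switching property: in every rank-two interval whose increasing chain
has word of labels `ab`, there is a unique chain with word of labels `ba`. -/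
def RankTwoSwitch (cov : α → α → Prop) (lab : α → α → L) (lt : L → L → Prop) : Prop :=
  ∀ x y c a b, IsSatChain cov x y c → IncWord lt (wordOf lab c) → wordOf lab c = [a, b] →
    ∃! c', IsSatChain cov x y c' ∧ wordOf lab c' = [b, a]

/-- In every interval, distinct ascent-free maximal chains have distinct label words. -/
def AscFreeInj (cov : α → α → Prop) (lab : α → α → L) (lt : L → L → Prop) : Prop :=
  ∀ x y c c', IsSatChain cov x y c → IsSatChain cov x y c' →
    AscFree lt (wordOf lab c) → AscFree lt (wordOf lab c') →
    wordOf lab c = wordOf lab c' → c = c'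

/-- An EW-labeling. -/
def IsEWLabeling (cov : α → α → Prop) (lab : α → α → L) (lt : L → L → Prop) : Prop :=
  IsERLabeling cov lab lt ∧ RankTwoSwitch cov lab lt ∧ AscFreeInj cov lab lt

/-- An EL-labeling: every closed interval has a unique increasing maximal chain,
which lexicographically precedes every other maximal chain of the interval. -/
def IsELLabeling (cov : α → α → Prop) (lab : α → α → L) (lt : L → L → Prop) : Prop :=
  ∀ x y, leOf cov x y →
    ∃ c, (IsSatChain cov x y c ∧ IncWord lt (wordOf lab c)) ∧
      ∀ c', IsSatChain cov x y c' → c' ≠ c →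
        ¬ IncWord lt (wordOf lab c') ∧ List.Lex lt (wordOf lab c) (wordOf lab c')

end Chains

/-! ## Möbius functions and Whitney numbers -/

section Whitney

variable {α : Type*} {β : Type*}

/-- Auxiliary Möbius function computed with fuel; for an element of rank `k` of a
graded poset, fuel `k` computes the one-variable Möbius function `μ(0̂, ·)`. -/
noncomputable def muAux (ltr : α → α → Prop) (bot : α) : ℕ → α → ℤ
  | 0, x => if x = bot then 1 else 0
  | k + 1, x => if x = bot then 1 else - ∑ᶠ (y : α) (_ : ltr y x), muAux ltr bot k y

/-- The one-variable Möbius function `μ(0̂, x)` of a graded poset presented by its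
cover relation `cov`, minimum `bot` and rank function `rk`. -/
noncomputable def muBot (cov : α → α → Prop) (bot : α) (rk : α → ℕ) (x : α) : ℤ :=
  muAux (ltOf cov) bot (rk x) x

/-- The `k`-th Whitney number of the first kind. -/
noncomputable def whitney1 (cov : α → α → Prop) (bot : α) (rk : α → ℕ) (k : ℕ) : ℤ :=
  ∑ᶠ (x : α) (_ : rk x = k), muBot cov bot rk x

/-- The `k`-th Whitney number of the second kind. -/
noncomputable def whitney2 (rk : α → ℕ) (k : ℕ) : ℕ :=
  Nat.card {x : α // rk x = k}

/-- Two graded posets are Whitney duals if their Whitney numbers of the first and second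
kind are swapped (up to sign). -/
def IsWhitneyDual (covP : α → α → Prop) (botP : α) (rkP : α → ℕ)
    (covQ : β → β → Prop) (botQ : β) (rkQ : β → ℕ) : Prop :=
  ∀ k, (whitney1 covP botP rkP k).natAbs = whitney2 rkQ k ∧
       (whitney1 covQ botQ rkQ k).natAbs = whitney2 rkP k

/-- Two graded posets are Whitney twins if they have the same Whitney numbers of the first
and of the second kind. -/
def IsWhitneyTwin (covP : α → α → Prop) (botP : α) (rkP : α → ℕ)
    (covQ : β → β → Prop) (botQ : β) (rkQ : β → ℕ) : Prop :=
  ∀ k, whitney1 covP botP rkP k = whitney1 covQ botQ rkQ k ∧ whitney2 rkP k = whitney2 rkQ k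

/-- `(cov, bot, rk)` presents a graded poset with minimum `bot`. -/
def IsGradedPoset (cov : α → α → Prop) (bot : α) (rk : α → ℕ) : Prop :=
  (∀ x, leOf cov bot x) ∧ rk bot = 0 ∧ ∀ x y, cov x y → rk y = rk x + 1

/-- A graded poset has a Whitney dual. -/
def HasWhitneyDual {γ : Type} (cov : γ → γ → Prop) (bot : γ) (rk : γ → ℕ) : Prop :=
  ∃ (β : Type) (_ : Finite β) (covQ : β → β → Prop) (botQ : β) (rkQ : β → ℕ),
    IsGradedPoset covQ botQ rkQ ∧ IsWhitneyDual cov bot rk covQ botQ rkQ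

/-- Isomorphism of the posets generated by two cover relations. -/
def CovPosetIso (covP : α → α → Prop) (covQ : β → β → Prop) : Prop :=
  ∃ e : α ≃ β, ∀ x y, leOf covP x y ↔ leOf covQ (e x) (e y)

end Whitney

/-! ## The label posets `Λₙʷ` and `Λₙ•` (strict order relations)

Labels are triples `(a, b, u)` with `a < b` in `[n]` and `u ∈ {0,1}` (encoded as `Bool`). -/

/-- The strict order of `Λₙʷ = Γ₁ ⊕ ⋯ ⊕ Γ_{n-1}` where `Γ_a` carries the product order
`(a,b)ᵘ ≤ (a,c)ᵛ ↔ b ≤ c ∧ u ≤ v`. -/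
def ltLw (x y : ℕ × ℕ × Bool) : Prop :=
  x.1 < y.1 ∨ (x.1 = y.1 ∧ x.2.1 ≤ y.2.1 ∧ x.2.2 ≤ y.2.2 ∧ x.2 ≠ y.2)

/-- The strict order of `Λₙ• = A₁ ⊕ C₁ ⊕ ⋯ ⊕ A_{n-1} ⊕ C_{n-1}` where `A_a` is the
antichain of the `(a,b)⁰` and `C_a` is the chain of the `(a,b)¹` ordered by `b`. -/
def ltLp (x y : ℕ × ℕ × Bool) : Prop :=
  x.1 < y.1 ∨ (x.1 = y.1 ∧
    ((x.2.2 = false ∧ y.2.2 = true) ∨ (x.2.2 = true ∧ y.2.2 = true ∧ x.2.1 < y.2.1)))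

/-! ## Pointed and weighted partition posets -/

/-- The minimum of a finite set of naturals (`0` for the empty set). -/
def minB (B : Finset ℕ) : ℕ := B.min.untopD 0

/-- Pointed partitions of the ground set `A`: partitions of `A` into blocks, each block
carrying a distinguished (pointed) element.  A pointed block is a pair `(B, p)` with `p ∈ B`. -/
abbrev PPart (A : Finset ℕ) : Type :=
  {π : Finset (Finset ℕ × ℕ) //
    (∀ b ∈ π, b.2 ∈ b.1) ∧
    (∀ b ∈ π, ∀ b' ∈ π, b ≠ b' → Disjoint b.1 b'.1) ∧
    π.biUnion Prod.fst = A}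

/-- The cover relation of the pointed partition poset: merge two pointed blocks, the merged
block being pointed at the pointed element of one of the two. -/
def covPP {A : Finset ℕ} (π π' : PPart A) : Prop :=
  ∃ b1 ∈ π.1, ∃ b2 ∈ π.1, minB b1.1 < minB b2.1 ∧
    ∃ p : ℕ, (p = b1.2 ∨ p = b2.2) ∧
      π'.1 = insert (b1.1 ∪ b2.1, p) ((π.1.erase b1).erase b2)

/-- The labeling `λ•` (as a bare label map): the cover `u`-merging blocks `A, B` with
`min A < min B` gets the label `(min A, min B, u)`, where `u = 1` exactly when the merged
block is pointed at the pointed element of `A`. -/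
noncomputable def labPP {A : Finset ℕ} (π π' : PPart A) : ℕ × ℕ × Bool :=
  let olds := π.1 \ π'.1
  let mins := olds.image (fun b => minB b.1)
  (mins.min.untopD 0, mins.max.unbotD 0,
    if ∃ b ∈ olds, minB b.1 = mins.min.untopD 0 ∧ ∃ d ∈ π'.1 \ π.1, d.2 = b.2
      then true else false)

/-- The minimum of the pointed partition poset: all blocks are pointed singletons. -/
def botPP (A : Finset ℕ) : PPart A :=
  ⟨A.image fun i => ({i}, i), by
    refine ⟨?_, ?_, ?_⟩
    · intro b hb
      obtain ⟨i, -, rfl⟩ := Finset.mem_image.1 hb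
      exact Finset.mem_singleton_self i
    · intro b hb b' hb' hne
      obtain ⟨i, -, rfl⟩ := Finset.mem_image.1 hb
      obtain ⟨j, -, rfl⟩ := Finset.mem_image.1 hb'
      have hij : i ≠ j := fun h => hne (by rw [h])
      simp [Finset.disjoint_left, hij]
    · ext x
      simp⟩

/-- The rank function of the pointed partition poset. -/
def rkPP {A : Finset ℕ} (π : PPart A) : ℕ := A.card - π.1.card

/-- Weighted partitions of the ground set `A`: partitions of `A` into blocks, each block `B`
carrying a weight `v` with `0 ≤ v ≤ |B| - 1`. -/
abbrev WPart (A : Finset ℕ) : Type :=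
  {π : Finset (Finset ℕ × ℕ) //
    (∀ b ∈ π, b.2 < b.1.card) ∧
    (∀ b ∈ π, ∀ b' ∈ π, b ≠ b' → Disjoint b.1 b'.1) ∧
    π.biUnion Prod.fst = A}

/-- The cover relation of the weighted partition poset: merge blocks `A^v, B^w` into
`(A ∪ B)^(v+w+u)` for some `u ∈ {0,1}`. -/
def covWP {A : Finset ℕ} (π π' : WPart A) : Prop :=
  ∃ b1 ∈ π.1, ∃ b2 ∈ π.1, minB b1.1 < minB b2.1 ∧ ∃ u : Bool,
    π'.1 = insert (b1.1 ∪ b2.1, b1.2 + b2.2 + (if u then 1 else 0)) ((π.1.erase b1).erase b2)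

/-- The labeling `λ_w` (as a bare label map): the cover merging `A^v, B^w` with
`min A < min B` into `(A ∪ B)^(v+w+u)` gets the label `(min A, min B, u)`. -/
noncomputable def labWP {A : Finset ℕ} (π π' : WPart A) : ℕ × ℕ × Bool :=
  let olds := π.1 \ π'.1
  let mins := olds.image (fun b => minB b.1)
  (mins.min.untopD 0, mins.max.unbotD 0,
    if (π'.1 \ π.1).sum Prod.snd = olds.sum Prod.snd + 1 then true else false)

/-- The minimum of the weighted partition poset: all blocks singletons of weight `0`. -/
def botWP (A : Finset ℕ) : WPart A :=
  ⟨A.image fun i => ({i}, 0), by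
    refine ⟨?_, ?_, ?_⟩
    · intro b hb
      obtain ⟨i, -, rfl⟩ := Finset.mem_image.1 hb
      simp
    · intro b hb b' hb' hne
      obtain ⟨i, -, rfl⟩ := Finset.mem_image.1 hb
      obtain ⟨j, -, rfl⟩ := Finset.mem_image.1 hb'
      have hij : i ≠ j := fun h => hne (by rw [h])
      simp [Finset.disjoint_left, hij]
    · ext x
      simp⟩

/-- The rank function of the weighted partition poset. -/
def rkWP {A : Finset ℕ} (π : WPart A) : ℕ := A.card - π.1.card
/-! ## Bicolored binary trees and Lyndon forests -/

/-- Planar binary trees with `ℕ`-labeled leaves and `Bool`-colored internal vertices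
(`false` = color 0, `true` = color 1). -/
inductive BT : Type
  | leaf : ℕ → BT
  | node : Bool → BT → BT → BT
deriving DecidableEq

namespace BT

/-- The valency: the minimum leaf label of a tree. -/
def nu : BT → ℕ
  | leaf a => a
  | node _ l r => min l.nu r.nu

/-- The set of leaf labels of a tree. -/
def leaves : BT → Finset ℕ
  | leaf a => {a}
  | node _ l r => l.leaves ∪ r.leaves

/-- The number of internal vertices of a tree. -/
def internals : BT → ℕ
  | leaf _ => 0
  | node _ l r => l.internals + r.internals + 1

/-- A tree is normalized if its leaf labels are distinct and every internal vertex has the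
same valency as its left child. -/
def normalized : BT → Prop
  | leaf _ => True
  | node _ l r => l.normalized ∧ r.normalized ∧ Disjoint l.leaves r.leaves ∧ l.nu < r.nu

/-- The pointed Lyndon condition: at every internal vertex `v` with internal left child,
`color (L v) ≥ color v`, and if `color (L v) = color v = 1` then `v` is a Lyndon vertex,
i.e. `ν (R (L v)) > ν (R v)`. -/
def pLyn : BT → Prop
  | leaf _ => True
  | node c l r => l.pLyn ∧ r.pLyn ∧
      (match l with
       | leaf _ => True
       | node c' _ r' => c ≤ c' ∧ ((c' = c ∧ c = true) → r.nu < r'.nu))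

/-- The bicolored Lyndon condition: every internal vertex with internal left child is
Lyndon (`ν (R (L v)) > ν (R v)`) or satisfies `color (L v) > color v`. -/
def wLyn : BT → Prop
  | leaf _ => True
  | node c l r => l.wLyn ∧ r.wLyn ∧
      (match l with
       | leaf _ => True
       | node c' _ r' => r.nu < r'.nu ∨ c < c')

/-- The pointed element of a bicolored tree: a `1`-colored vertex keeps the point of its
left subtree and a `0`-colored vertex keeps the point of its right subtree. -/
def ppt : BT → ℕ
  | leaf a => a
  | node c l r => if c then l.ppt else r.ppt

end BT

/-- `u`-merging of two pointed Lyndon trees: create a new root of color `u` with the two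
trees as subtrees, then repeatedly slide the new vertex together with its right subtree
past its left child until the pointed Lyndon condition holds at the new vertex. -/
def mergeP (u : Bool) : BT → BT → BT
  | BT.leaf a, t2 => BT.node u (BT.leaf a) t2
  | BT.node c a b, t2 =>
      if u ≤ c ∧ ((c = true ∧ u = true) → t2.nu < b.nu)
      then BT.node u (BT.node c a b) t2
      else BT.node c (mergeP u a t2) b

/-- `u`-merging of two bicolored Lyndon trees: create a new root of color `u` with the two
trees as subtrees, then repeatedly slide the new vertex together with its right subtree
past its left child until the bicolored Lyndon condition holds at the new vertex. -/
def mergeW (u : Bool) : BT → BT → BT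
  | BT.leaf a, t2 => BT.node u (BT.leaf a) t2
  | BT.node c a b, t2 =>
      if t2.nu < b.nu ∨ u < c
      then BT.node u (BT.node c a b) t2
      else BT.node c (mergeW u a t2) b

/-- A valid forest on the ground set `[n]`, each tree normalized and satisfying `P`, the
trees having pairwise disjoint leaf sets which together cover `[n] = {1, …, n}`. -/
def ForestValid (n : ℕ) (P : BT → Prop) (F : Finset BT) : Prop :=
  (∀ t ∈ F, t.normalized ∧ P t) ∧
  (∀ t ∈ F, ∀ t' ∈ F, t ≠ t' → Disjoint t.leaves t'.leaves) ∧
  F.biUnion BT.leaves = Finset.Icc 1 n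

/-- The set of pointed Lyndon forests on `[n]`. -/
abbrev FLynP (n : ℕ) : Type := {F : Finset BT // ForestValid n BT.pLyn F}

/-- The set of bicolored Lyndon forests on `[n]`. -/
abbrev FLynW (n : ℕ) : Type := {F : Finset BT // ForestValid n BT.wLyn F}

/-- The cover relation on forests: `u`-merge two of the trees (the one with smaller minimum
leaf label going to the left). -/
def covForest (merge : Bool → BT → BT → BT) (F F' : Finset BT) : Prop :=
  ∃ t1 ∈ F, ∃ t2 ∈ F, t1.nu < t2.nu ∧ ∃ u : Bool,
    F' = insert (merge u t1 t2) ((F.erase t1).erase t2)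

/-- The cover relation of the poset of pointed Lyndon forests `FLyn_n^•`. -/
def covFP {n : ℕ} (F F' : FLynP n) : Prop := covForest mergeP F.1 F'.1

/-- The cover relation of the poset of bicolored Lyndon forests `FLyn_n^w`. -/
def covFW {n : ℕ} (F F' : FLynW n) : Prop := covForest mergeW F.1 F'.1

/-- The forest of `n` isolated leaves. -/
def botForest (n : ℕ) : Finset BT := (Finset.Icc 1 n).image BT.leaf

theorem botForest_valid (n : ℕ) (P : BT → Prop) (hP : ∀ a, P (BT.leaf a)) :
    ForestValid n P (botForest n) := by
  refine ⟨?_, ?_, ?_⟩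
  · intro t ht
    obtain ⟨i, -, rfl⟩ := Finset.mem_image.1 ht
    exact ⟨trivial, hP i⟩
  · intro t ht t' ht' hne
    obtain ⟨i, -, rfl⟩ := Finset.mem_image.1 ht
    obtain ⟨j, -, rfl⟩ := Finset.mem_image.1 ht'
    have hij : i ≠ j := fun h => hne (by rw [h])
    simp only [BT.leaves]
    simp [Finset.disjoint_left, hij]
  · ext x
    simp [botForest, BT.leaves]

/-- The minimum of the poset of pointed Lyndon forests. -/
def botFP (n : ℕ) : FLynP n := ⟨botForest n, botForest_valid n _ fun _ => trivial⟩

/-- The minimum of the poset of bicolored Lyndon forests. -/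
def botFW (n : ℕ) : FLynW n := ⟨botForest n, botForest_valid n _ fun _ => trivial⟩

/-- The rank of a forest: its total number of internal vertices. -/
def rkForest (F : Finset BT) : ℕ := F.sum BT.internals

/-- The rank function of `FLyn_n^•`. -/
def rkFP {n : ℕ} (F : FLynP n) : ℕ := rkForest F.1

/-- The rank function of `FLyn_n^w`. -/
def rkFW {n : ℕ} (F : FLynW n) : ℕ := rkForest F.1

/-! ## The Whitney dual construction `R_λ(P)` -/

section RPoset

variable {α : Type*} {L : Type*}

/-- Swap the leftmost ascent of a word of labels. -/
noncomputable def swapFirstAscent (lt : L → L → Prop) : List L → List L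
  | a :: b :: rest => if lt a b then b :: a :: rest else a :: swapFirstAscent lt (b :: rest)
  | w => w

/-- Sort a word of labels by repeatedly swapping its leftmost ascent until it is
ascent-free. -/
noncomputable def sortWord (lt : L → L → Prop) (w : List L) : List L :=
  (swapFirstAscent lt)^[w.length * w.length] w

/-- The underlying set of the Whitney dual `R_λ(P)`: pairs `(x, w)` where `w` is the label
word of an ascent-free saturated chain from `0̂` to `x`. -/
abbrev RPoset (cov : α → α → Prop) (lab : α → α → L) (lt : L → L → Prop) (bot : α) : Type _ :=
  {q : α × List L //
    ∃ c, IsSatChain cov bot q.1 c ∧ AscFree lt (wordOf lab c) ∧ wordOf lab c = q.2}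

/-- The cover relation of `R_λ(P)`: `(x, w) ⋖ (y, u)` iff `x ⋖ y` and `u` is obtained by
sorting the label of `x ⋖ y` into `w`. -/
def covR (cov : α → α → Prop) (lab : α → α → L) (lt : L → L → Prop) (bot : α)
    (p q : RPoset cov lab lt bot) : Prop :=
  cov p.1.1 q.1.1 ∧ q.1.2 = sortWord lt (p.1.2 ++ [lab p.1.1 q.1.1])

end RPoset

/-! ## Reiner's poset of rooted spanning forests -/

/-- A rooted spanning forest on `[n]`, encoded by its parent function: `f i` is the parent
of the vertex `i` (`f i = i` for roots), vertices outside `[n]` being fixed, and every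
vertex reaching a root after finitely many steps (acyclicity). -/
def SFvalid (n : ℕ) (f : ℕ → ℕ) : Prop :=
  (∀ i ∈ Finset.Icc 1 n, f i ∈ Finset.Icc 1 n) ∧
  (∀ i, i ∉ Finset.Icc 1 n → f i = i) ∧
  (∀ i, ∃ k, f^[k + 1] i = f^[k] i)

/-- Reiner's poset `SF_n` of rooted spanning forests of the complete graph on `[n]`. -/
abbrev SF (n : ℕ) : Type := {f : ℕ → ℕ // SFvalid n f}

/-- The cover relation of `SF_n`: add an edge between the roots of two trees, one of the
two roots becoming the root of the merged tree. -/
def covSF {n : ℕ} (f g : SF n) : Prop :=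
  ∃ r1 ∈ Finset.Icc 1 n, ∃ r2 ∈ Finset.Icc 1 n, r1 ≠ r2 ∧
    f.1 r1 = r1 ∧ f.1 r2 = r2 ∧
    (g.1 = Function.update f.1 r1 r2 ∨ g.1 = Function.update f.1 r2 r1)

/-- The rank of a rooted spanning forest: its number of edges. -/
def rkSF {n : ℕ} (f : SF n) : ℕ := ((Finset.Icc 1 n).filter fun i => f.1 i ≠ i).card
/-! ## Further constructions used in particular statements -/

/-- The map `Φ` on underlying finsets: a pointed block `(B, q)` of a pointed partition
above `α` is sent to the set of minima of the `α`-blocks contained in `B`, pointed at the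
minimum of the `α`-block containing `q`. -/
noncomputable def PhiMap (af : Finset (Finset ℕ × ℕ)) (pf : Finset (Finset ℕ × ℕ)) :
    Finset (Finset ℕ × ℕ) :=
  pf.image fun b =>
    ((af.filter fun c => c.1 ⊆ b.1).image fun c => minB c.1,
     ((af.filter fun c => b.2 ∈ c.1).image fun c => minB c.1).min.untopD 0)

/-- The expected word of labels of the unique increasing maximal chain of the interval
`[0̂, [n]^p]` of the pointed partition poset:
`(1,2)¹ ⋯ (1,n)¹` if `p = 1`, and `(1,p)⁰ (1,2)¹ ⋯ (1,p-1)¹ (1,p+1)¹ ⋯ (1,n)¹` otherwise. -/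
def expectedWordP (n p : ℕ) : List (ℕ × ℕ × Bool) :=
  let base := (List.range (n - 1)).map fun i => ((1 : ℕ), i + 2, true)
  if p = 1 then base else ((1 : ℕ), p, false) :: base.erase (1, p, true)

/-- Merge two words of labels, each with non-increasing first components, into a single
word with non-increasing first components. -/
def mergeByNu : List (ℕ × ℕ × Bool) → List (ℕ × ℕ × Bool) → List (ℕ × ℕ × Bool)
  | [], ys => ys
  | xs, [] => xs
  | x :: xs, y :: ys =>
      if y.1 ≤ x.1 then x :: mergeByNu xs (y :: ys) else y :: mergeByNu (x :: xs) ys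
termination_by xs ys => xs.length + ys.length

/-- The word of labels of a tree read along the reverse-minimal linear extension of its
internal vertices: the internal vertex `v` contributes `(ν (L v), ν (R v), color v)`, the
vertices being listed with non-increasing valencies (descendants first among equal
valencies). -/
def BT.rmword : BT → List (ℕ × ℕ × Bool)
  | BT.leaf _ => []
  | BT.node c l r => mergeByNu l.rmword r.rmword ++ [(l.nu, r.nu, c)]

/-- The word of labels of the saturated chain `c(F)` associated to a forest `F`, read along
the reverse-minimal linear extension of the internal vertices of `F`. -/
noncomputable def forestWord (F : Finset BT) : List (ℕ × ℕ × Bool) :=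
  (F.toList.map BT.rmword).foldr mergeByNu []

/-- `TLyn_{n,p}^•`: pointed Lyndon trees on `[n]` whose associated chain ends at `[n]^p`,
i.e. whose tracked pointed element is `p`. -/
abbrev TLynBullet (n p : ℕ) : Type :=
  {T : BT // T.normalized ∧ T.pLyn ∧ T.leaves = Finset.Icc 1 n ∧ T.ppt = p}

/-- The labeling `λ̃` of `Πₙ•` proposed by Bellier-Millès, Delcroix-Oger and Hoffbeck:
the cover `u`-merging blocks with minima `a < b` in a pointed partition `π` with `|π|`
blocks is labeled `(b, a + n - |π|)` if `u = 0` and `(b, b + n - |π|)` if `u = 1`. -/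
noncomputable def labT (n : ℕ) {A : Finset ℕ} (π π' : PPart A) : ℕ × ℕ :=
  let olds := π.1 \ π'.1
  let mins := olds.image fun b => minB b.1
  let a := mins.min.untopD 0
  let b := mins.max.unbotD 0
  if ∃ c ∈ olds, minB c.1 = a ∧ ∃ d ∈ π'.1 \ π.1, d.2 = c.2
  then (b, b + n - π.1.card)
  else (b, a + n - π.1.card)

/-- The (strict) lexicographic order on `ℕ × ℕ`. -/
def ltT (x y : ℕ × ℕ) : Prop := x.1 < y.1 ∨ (x.1 = y.1 ∧ x.2 < y.2)

/-! ### Auxiliary development for Statement 6 -/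

section EL6

open List

variable {A : Finset ℕ}

lemma ltLw_trans : Transitive ltLw := by
  rintro ⟨a₁, b₁, u₁⟩ ⟨a₂, b₂, u₂⟩ ⟨a₃, b₃, u₃⟩ h h'
  rcases h with h | ⟨rfl, hb, hu, hne⟩ <;> rcases h' with h' | ⟨rfl, hb', hu', hne'⟩
  · exact Or.inl (h.trans h')
  · exact Or.inl h
  · exact Or.inl h'
  · refine Or.inr ⟨rfl, le_trans hb hb', le_trans hu hu', ?_⟩
    rintro h
    simp only [Prod.mk.injEq] at h
    obtain ⟨h1, h2⟩ := h
    have : b₁ = b₂ := le_antisymm hb (h1 ▸ hb')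
    have : u₁ = u₂ := le_antisymm hu (h2 ▸ hu')
    exact hne (by simp_all)

instance : IsTrans (ℕ × ℕ × Bool) ltLw := ⟨ltLw_trans⟩

lemma minB_mem {s : Finset ℕ} (h : s.Nonempty) : minB s ∈ s := by
  obtain ⟨m, hm⟩ := Finset.min_of_nonempty h
  have hthis : minB s = m := by rw [minB, hm]; rfl
  rw [hthis]; exact Finset.mem_of_min hm

lemma minB_le {s : Finset ℕ} {a : ℕ} (h : a ∈ s) : minB s ≤ a := by
  obtain ⟨m, hm⟩ := Finset.min_of_nonempty ⟨a, h⟩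
  have h1 : minB s = m := by rw [minB, hm]; rfl
  have := Finset.min_le h
  rw [hm] at this
  exact h1 ▸ (by exact_mod_cast this)

lemma minB_le_minB {s t : Finset ℕ} (hst : s ⊆ t) (h : s.Nonempty) : minB t ≤ minB s :=
  minB_le (hst (minB_mem h))

lemma minB_eq_of_mem_of_le {s : Finset ℕ} {a : ℕ} (ha : a ∈ s) (h : ∀ b ∈ s, a ≤ b) :
    minB s = a :=
  le_antisymm (minB_le ha) (h _ (minB_mem ⟨a, ha⟩))

/-! #### Pointed partition block lemmas -/

lemma blk_nonempty {π : PPart A} {b} (hb : b ∈ π.1) : b.1.Nonempty := ⟨b.2, π.2.1 b hb⟩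

lemma blk_eq_of_mem {π : PPart A} {b b'} (hb : b ∈ π.1) (hb' : b' ∈ π.1) {a : ℕ}
    (ha : a ∈ b.1) (ha' : a ∈ b'.1) : b = b' := by
  by_contra h
  exact (Finset.disjoint_left.1 (π.2.2.1 b hb b' hb' h)) ha ha'

lemma exists_blk {π : PPart A} {a : ℕ} (ha : a ∈ A) : ∃ b ∈ π.1, a ∈ b.1 := by
  have := π.2.2.2
  rw [← this] at ha
  simpa using Finset.mem_biUnion.1 ha

lemma minB_blk_inj {π : PPart A} {b b'} (hb : b ∈ π.1) (hb' : b' ∈ π.1)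
    (h : minB b.1 = minB b'.1) : b = b' :=
  blk_eq_of_mem hb hb' (minB_mem (blk_nonempty hb)) (h ▸ minB_mem (blk_nonempty hb'))

lemma pt_ne {π : PPart A} {b b'} (hb : b ∈ π.1) (hb' : b' ∈ π.1) (hne : b ≠ b') :
    b.2 ≠ b'.2 := by
  intro h
  exact hne (blk_eq_of_mem hb hb' (π.2.1 b hb) (h ▸ π.2.1 b' hb'))

/-! #### Cover data -/

structure CovData (π π' : PPart A) where
  b1 : Finset ℕ × ℕ
  b2 : Finset ℕ × ℕ
  hb1 : b1 ∈ π.1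
  hb2 : b2 ∈ π.1
  hlt : minB b1.1 < minB b2.1
  p : ℕ
  hp : p = b1.2 ∨ p = b2.2
  heq : π'.1 = insert (b1.1 ∪ b2.1, p) ((π.1.erase b1).erase b2)

lemma covPP_iff {π π' : PPart A} : covPP π π' ↔ Nonempty (CovData π π') := by
  constructor
  · rintro ⟨b1, hb1, b2, hb2, hlt, p, hp, heq⟩
    exact ⟨⟨b1, b2, hb1, hb2, hlt, p, hp, heq⟩⟩
  · rintro ⟨d⟩
    exact ⟨d.b1, d.hb1, d.b2, d.hb2, d.hlt, d.p, d.hp, d.heq⟩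

namespace CovData

variable {π π' : PPart A} (d : CovData π π')

lemma ne12 : d.b1 ≠ d.b2 := fun h => absurd (congrArg (fun b => minB b.1) h) (ne_of_lt d.hlt)

lemma disj12 : Disjoint d.b1.1 d.b2.1 := π.2.2.1 _ d.hb1 _ d.hb2 d.ne12

/-- The merged block. -/
def m : Finset ℕ × ℕ := (d.b1.1 ∪ d.b2.1, d.p)

lemma p_mem : d.p ∈ d.m.1 := by
  rcases d.hp with h | h <;> rw [h]
  · exact Finset.mem_union_left _ (π.2.1 _ d.hb1)
  · exact Finset.mem_union_right _ (π.2.1 _ d.hb2)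

lemma m_not_mem : d.m ∉ π.1 := by
  intro hm
  have h1 : d.m = d.b1 := blk_eq_of_mem hm d.hb1 (by
      exact Finset.mem_union_left _ (minB_mem (blk_nonempty d.hb1)))
    (minB_mem (blk_nonempty d.hb1))
  have h2 : d.b2.2 ∈ d.b1.1 := by
    have : d.b2.2 ∈ d.m.1 := Finset.mem_union_right _ (π.2.1 _ d.hb2)
    rwa [h1] at this
  exact (Finset.disjoint_left.1 d.disj12) h2 (π.2.1 _ d.hb2)

lemma mem_m : d.m ∈ π'.1 := by rw [d.heq]; exact Finset.mem_insert_self _ _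

lemma mem_of_ne {b} (hb : b ∈ π.1) (h1 : b ≠ d.b1) (h2 : b ≠ d.b2) : b ∈ π'.1 := by
  rw [d.heq]
  exact Finset.mem_insert_of_mem (Finset.mem_erase.2 ⟨h2, Finset.mem_erase.2 ⟨h1, hb⟩⟩)

lemma mem_or {b} (hb : b ∈ π'.1) : b = d.m ∨ (b ∈ π.1 ∧ b ≠ d.b1 ∧ b ≠ d.b2) := by
  rw [d.heq] at hb
  rcases Finset.mem_insert.1 hb with h | h
  · exact Or.inl h
  · obtain ⟨h2, hbb⟩ := Finset.mem_erase.1 h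
    obtain ⟨h1, hbbb⟩ := Finset.mem_erase.1 hbb
    exact Or.inr ⟨hbbb, h1, h2⟩

lemma b1_not_mem : d.b1 ∉ π'.1 := by
  intro h
  rcases d.mem_or h with h | ⟨_, h1, _⟩
  · exact d.m_not_mem (h ▸ d.hb1)
  · exact h1 rfl

lemma b2_not_mem : d.b2 ∉ π'.1 := by
  intro h
  rcases d.mem_or h with h | ⟨_, _, h2⟩
  · exact d.m_not_mem (h ▸ d.hb2)
  · exact h2 rfl

lemma olds_eq : π.1 \ π'.1 = {d.b1, d.b2} := by
  ext b
  simp only [Finset.mem_sdiff, Finset.mem_insert, Finset.mem_singleton]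
  constructor
  · rintro ⟨hb, hb'⟩
    by_contra h
    push_neg at h
    exact hb' (d.mem_of_ne hb h.1 h.2)
  · rintro (rfl | rfl)
    · exact ⟨d.hb1, d.b1_not_mem⟩
    · exact ⟨d.hb2, d.b2_not_mem⟩

lemma news_eq : π'.1 \ π.1 = {d.m} := by
  ext b
  simp only [Finset.mem_sdiff, Finset.mem_singleton]
  constructor
  · rintro ⟨hb, hb'⟩
    rcases d.mem_or hb with h | ⟨h, _, _⟩
    · exact h
    · exact absurd h hb'
  · rintro rfl
    exact ⟨d.mem_m, d.m_not_mem⟩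

lemma card_eq (d : CovData π π') : π.1.card = π'.1.card + 1 := by
  rw [d.heq]
  rw [Finset.card_insert_of_notMem (by
    intro h
    exact d.m_not_mem (Finset.mem_of_mem_erase (Finset.mem_of_mem_erase h)))]
  rw [Finset.card_erase_of_mem (Finset.mem_erase.2 ⟨d.ne12.symm, d.hb2⟩),
    Finset.card_erase_of_mem d.hb1]
  have h2 : 2 ≤ π.1.card := Finset.one_lt_card.2 ⟨_, d.hb1, _, d.hb2, d.ne12⟩
  omega

lemma label_eq : labPP π π' = (minB d.b1.1, minB d.b2.1, if d.p = d.b1.2 then true else false) := by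
  have himg : ({d.b1, d.b2} : Finset (Finset ℕ × ℕ)).image (fun b => minB b.1)
      = {minB d.b1.1, minB d.b2.1} := by simp
  have hmin : ({minB d.b1.1, minB d.b2.1} : Finset ℕ).min = (minB d.b1.1 : WithTop ℕ) := by
    simp only [Finset.min_insert, Finset.min_singleton]
    exact min_eq_left (by exact_mod_cast le_of_lt d.hlt)
  have hmax : ({minB d.b1.1, minB d.b2.1} : Finset ℕ).max = (minB d.b2.1 : WithBot ℕ) := by
    simp only [Finset.max_insert, Finset.max_singleton]
    exact max_eq_right (by exact_mod_cast le_of_lt d.hlt)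
  unfold labPP
  have huntop : (minB d.b1.1 : WithTop ℕ).untopD 0 = minB d.b1.1 := rfl
  have hunbot : (minB d.b2.1 : WithBot ℕ).unbotD 0 = minB d.b2.1 := rfl
  simp only [d.olds_eq, d.news_eq, himg, hmin, hmax, huntop, hunbot, Prod.mk.injEq,
    true_and, eq_self_iff_true]
  by_cases hyp : d.p = d.b1.2
  · rw [if_pos hyp, if_pos]
    exact ⟨d.b1, by simp, rfl, d.m, by simp, hyp⟩
  · rw [if_neg hyp, if_neg]
    rintro ⟨b, hb, hminb, dd, hdd, hd2⟩
    simp only [Finset.mem_singleton] at hdd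
    simp only [Finset.mem_insert, Finset.mem_singleton] at hb
    subst hdd
    rcases hb with rfl | rfl
    · exact hyp (by rw [← hd2]; rfl)
    · exact absurd hminb (ne_of_gt d.hlt)

end CovData

section CovWrappers

variable {π π' : PPart A} {b1 b2 : Finset ℕ × ℕ} {p : ℕ}

lemma cov_label_eq (hb1 : b1 ∈ π.1) (hb2 : b2 ∈ π.1)
    (hlt : minB b1.1 < minB b2.1) (hp : p = b1.2 ∨ p = b2.2)
    (heq : π'.1 = insert (b1.1 ∪ b2.1, p) ((π.1.erase b1).erase b2)) :
    labPP π π' = (minB b1.1, minB b2.1, if p = b1.2 then true else false) :=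
  CovData.label_eq ⟨b1, b2, hb1, hb2, hlt, p, hp, heq⟩

lemma cov_mem_or (hb1 : b1 ∈ π.1) (hb2 : b2 ∈ π.1)
    (hlt : minB b1.1 < minB b2.1) (hp : p = b1.2 ∨ p = b2.2)
    (heq : π'.1 = insert (b1.1 ∪ b2.1, p) ((π.1.erase b1).erase b2))
    {b} (hb : b ∈ π'.1) :
    b = (b1.1 ∪ b2.1, p) ∨ (b ∈ π.1 ∧ b ≠ b1 ∧ b ≠ b2) :=
  CovData.mem_or ⟨b1, b2, hb1, hb2, hlt, p, hp, heq⟩ hb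

lemma cov_mem_m (hb1 : b1 ∈ π.1) (hb2 : b2 ∈ π.1)
    (hlt : minB b1.1 < minB b2.1) (hp : p = b1.2 ∨ p = b2.2)
    (heq : π'.1 = insert (b1.1 ∪ b2.1, p) ((π.1.erase b1).erase b2)) :
    (b1.1 ∪ b2.1, p) ∈ π'.1 :=
  CovData.mem_m ⟨b1, b2, hb1, hb2, hlt, p, hp, heq⟩

lemma cov_mem_of_ne (hb1 : b1 ∈ π.1) (hb2 : b2 ∈ π.1)
    (hlt : minB b1.1 < minB b2.1) (hp : p = b1.2 ∨ p = b2.2)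
    (heq : π'.1 = insert (b1.1 ∪ b2.1, p) ((π.1.erase b1).erase b2))
    {b} (hb : b ∈ π.1) (h1 : b ≠ b1) (h2 : b ≠ b2) : b ∈ π'.1 :=
  CovData.mem_of_ne ⟨b1, b2, hb1, hb2, hlt, p, hp, heq⟩ hb h1 h2


lemma cov_card_eq {π π' : PPart A} {b1 b2 : Finset ℕ × ℕ} {p : ℕ} (hb1 : b1 ∈ π.1) (hb2 : b2 ∈ π.1)
    (hlt : minB b1.1 < minB b2.1) (hp : p = b1.2 ∨ p = b2.2)
    (heq : π'.1 = insert (b1.1 ∪ b2.1, p) ((π.1.erase b1).erase b2)) :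
    π.1.card = π'.1.card + 1 :=
  CovData.card_eq ⟨b1, b2, hb1, hb2, hlt, p, hp, heq⟩

end CovWrappers

/-! #### The refinement relation -/

def RefP (x y : PPart A) : Prop :=
  (∀ b ∈ x.1, ∃ B ∈ y.1, b.1 ⊆ B.1) ∧
  (∀ B ∈ y.1, ∀ b ∈ x.1, B.2 ∈ b.1 → b.2 = B.2)

lemma refP_refl (y : PPart A) : RefP y y := by
  refine ⟨fun b hb => ⟨b, hb, le_refl _⟩, fun B hB b hb hmem => ?_⟩
  rw [blk_eq_of_mem hb hB hmem (y.2.1 B hB)]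

lemma refP_cov {x z y : PPart A} (d : CovData x z) (h : RefP z y) : RefP x y := by
  obtain ⟨h1, h2⟩ := h
  constructor
  · intro b hb
    by_cases hb1 : b = d.b1
    · obtain ⟨B, hB, hsub⟩ := h1 d.m d.mem_m
      exact ⟨B, hB, hb1 ▸ (Finset.subset_union_left.trans hsub)⟩
    by_cases hb2 : b = d.b2
    · obtain ⟨B, hB, hsub⟩ := h1 d.m d.mem_m
      exact ⟨B, hB, hb2 ▸ (Finset.subset_union_right.trans hsub)⟩
    · exact h1 b (d.mem_of_ne hb hb1 hb2)
  · intro B hB b hb hmem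
    by_cases hb1 : b = d.b1
    · subst hb1
      have hm : d.m.2 = B.2 := h2 B hB d.m d.mem_m (Finset.mem_union_left _ hmem)
      rcases d.hp with hp | hp
    -- d.m.2 = d.p
      · rw [← hp]; exact hm
      · exfalso
        have : B.2 ∈ d.b2.1 := by
          have : d.m.2 = d.p := rfl
          rw [this, hp] at hm; rw [← hm]; exact x.2.1 _ d.hb2
        exact (Finset.disjoint_left.1 d.disj12) hmem this
    by_cases hb2 : b = d.b2
    · subst hb2
      have hm : d.m.2 = B.2 := h2 B hB d.m d.mem_m (Finset.mem_union_right _ hmem)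
      rcases d.hp with hp | hp
      · exfalso
        have : B.2 ∈ d.b1.1 := by
          have : d.m.2 = d.p := rfl
          rw [this, hp] at hm; rw [← hm]; exact x.2.1 _ d.hb1
        exact (Finset.disjoint_left.1 d.disj12) this hmem
      · rw [← hp]; exact hm
    · exact h2 B hB b (d.mem_of_ne hb hb1 hb2) hmem

/-! #### Saturated chain helpers -/

lemma isSatChain_cases {α : Type*} {cov : α → α → Prop} {x y : α} {c : List α}
    (h : IsSatChain cov x y c) :
    (c = [x] ∧ x = y) ∨ ∃ z rest, c = x :: z :: rest ∧ cov x z ∧ IsSatChain cov z y (z :: rest) := by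
  obtain ⟨hch, hhd, hlast⟩ := h
  match c, hhd with
  | x' :: t, hhd =>
    have hx : x' = x := by simpa using hhd
    subst hx
    match t with
    | [] =>
      left
      exact ⟨rfl, by simpa using hlast⟩
    | z :: rest =>
      right
      obtain ⟨h1, h2⟩ := List.isChain_cons_cons.1 hch
      refine ⟨z, rest, rfl, h1, h2, rfl, ?_⟩
      rw [← hlast, List.getLast?_cons_cons]

lemma refP_of_sat {y : PPart A} :
    ∀ (c : List (PPart A)) (z : PPart A), IsSatChain covPP z y c → RefP z y := by
  intro c
  induction c with
  | nil => intro z h; exact absurd h.2.1 (by simp)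
  | cons x t ih =>
    intro z h
    have hx : x = z := by simpa using h.2.1
    subst hx
    rcases isSatChain_cases h with ⟨hc, rfl⟩ | ⟨w, rest, hc, hcov, htail⟩
    · exact refP_refl _
    · have hts : t = w :: rest := by injection hc
      exact refP_cov (covPP_iff.1 hcov).some (ih w (hts ▸ htail))

lemma card_le_of_sat {y : PPart A} :
    ∀ (c : List (PPart A)) (z : PPart A), IsSatChain covPP z y c → y.1.card ≤ z.1.card := by
  intro c
  induction c with
  | nil => intro z h; exact absurd h.2.1 (by simp)
  | cons x t ih =>
    intro z h
    have hx : x = z := by simpa using h.2.1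
    subst hx
    rcases isSatChain_cases h with ⟨hc, rfl⟩ | ⟨w, rest, hc, hcov, htail⟩
    · exact le_refl _
    · have hts : t = w :: rest := by injection hc
      have := ih w (hts ▸ htail)
      have hcard := (covPP_iff.1 hcov).some.card_eq
      omega

lemma wordOf_cons {α L : Type*} (lab : α → α → L) (x z : α) (rest : List α) :
    wordOf lab (x :: z :: rest) = lab x z :: wordOf lab (z :: rest) := rfl

/-! #### Two chain-tracking lemmas -/

lemma future_label {y : PPart A} {B : Finset ℕ × ℕ} (hB : B ∈ y.1) {e t : ℕ}
    (ht : t ∈ B.1) (hmin : e = minB B.1) :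
    ∀ (c : List (PPart A)) (z : PPart A), IsSatChain covPP z y c →
      (∀ b ∈ z.1, ¬(e ∈ b.1 ∧ t ∈ b.1)) →
      ∃ ℓ ∈ wordOf labPP c, ℓ.1 = e ∧ ℓ.2.1 ≤ t := by
  intro c
  induction c with
  | nil => intro z h; exact absurd h.2.1 (by simp)
  | cons x rest0 ih =>
    intro z h hsep
    have hx : x = z := by simpa using h.2.1
    subst hx
    rcases isSatChain_cases h with ⟨hc, rfl⟩ | ⟨w, rest, hc, hcov, htail⟩
    · exact absurd ⟨hmin ▸ minB_mem ⟨t, ht⟩, ht⟩ (hsep B hB)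
    · have hts : rest0 = w :: rest := by injection hc
      subst hts
      obtain ⟨d⟩ := covPP_iff.1 hcov
      have hrefw : RefP w y := refP_of_sat _ _ htail
      by_cases hm : e ∈ d.m.1 ∧ t ∈ d.m.1
      · -- the merge step is the one we seek
        obtain ⟨C, hC, hsub⟩ := hrefw.1 d.m d.mem_m
        obtain ⟨hme, hmt⟩ := hm
        have hCB : C = B := blk_eq_of_mem hC hB (hsub hmt) ht
        subst hCB
        have hle : e ≤ minB d.b1.1 := by
          rw [hmin]
          exact minB_le_minB (Finset.subset_union_left.trans hsub) (blk_nonempty d.hb1)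
        have hb1e : e ∈ d.b1.1 := by
          rcases Finset.mem_union.1 hme with h' | h'
          · exact h'
          · exfalso
            have h1 : minB d.b2.1 ≤ e := minB_le h'
            have h3 := d.hlt
            omega
        have htb2 : t ∈ d.b2.1 := by
          rcases Finset.mem_union.1 hmt with h' | h'
          · exact absurd ⟨hb1e, h'⟩ (hsep d.b1 d.hb1)
          · exact h'
        refine ⟨labPP x w, by rw [wordOf_cons]; exact List.mem_cons_self, ?_, ?_⟩
        · rw [d.label_eq]
          exact le_antisymm (minB_le hb1e) hle
        · rw [d.label_eq]
          exact minB_le htb2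
      · -- separation persists
        have hsep2 : ∀ b ∈ w.1, ¬(e ∈ b.1 ∧ t ∈ b.1) := by
          intro b hb
          rcases d.mem_or hb with rfl | ⟨hbz, _, _⟩
          · exact hm
          · exact hsep b hbz
        obtain ⟨ℓ, hℓ, h1, h2⟩ := ih w htail hsep2
        exact ⟨ℓ, by rw [wordOf_cons]; exact List.mem_cons_of_mem _ hℓ, h1, h2⟩

lemma point_track {y : PPart A} {B : Finset ℕ × ℕ} (hB : B ∈ y.1) {e : ℕ}
    (hmin : e = minB B.1) :
    ∀ (c : List (PPart A)) (z : PPart A), IsSatChain covPP z y c →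
      (∀ ℓ ∈ wordOf labPP c, ℓ.1 = e → ℓ.2.2 = true) →
      ∀ b ∈ z.1, e ∈ b.1 → b.2 = B.2 := by
  intro c
  induction c with
  | nil => intro z h; exact absurd h.2.1 (by simp)
  | cons x rest0 ih =>
    intro z h hlab b hb hbe
    have hx : x = z := by simpa using h.2.1
    subst hx
    rcases isSatChain_cases h with ⟨hc, rfl⟩ | ⟨w, rest, hc, hcov, htail⟩
    · rw [blk_eq_of_mem hb hB hbe (hmin ▸ minB_mem (blk_nonempty hB))]
    · have hts : rest0 = w :: rest := by injection hc
      subst hts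
      obtain ⟨d⟩ := covPP_iff.1 hcov
      have hrefw : RefP w y := refP_of_sat _ _ htail
      have hlab2 : ∀ ℓ ∈ wordOf labPP (w :: rest), ℓ.1 = e → ℓ.2.2 = true := by
        intro ℓ hℓ
        exact hlab ℓ (by rw [wordOf_cons]; exact List.mem_cons_of_mem _ hℓ)
      by_cases hme : e ∈ d.m.1
      · obtain ⟨C, hC, hsub⟩ := hrefw.1 d.m d.mem_m
        have hCB : C = B := blk_eq_of_mem hC hB (hsub hme)
          (hmin ▸ minB_mem (blk_nonempty hB))
        subst hCB
        have hle : e ≤ minB d.b1.1 := by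
          rw [hmin]
          exact minB_le_minB (Finset.subset_union_left.trans hsub) (blk_nonempty d.hb1)
        have hb1e : e ∈ d.b1.1 := by
          rcases Finset.mem_union.1 hme with h' | h'
          · exact h'
          · exfalso
            have h1 : minB d.b2.1 ≤ e := minB_le h'
            have h3 := d.hlt
            omega
        have hbb1 : b = d.b1 := blk_eq_of_mem hb d.hb1 hbe hb1e
        have hminb1 : minB d.b1.1 = e := le_antisymm (minB_le hb1e) hle
        have hu : (labPP x w).2.2 = true := by
          apply hlab _ (by rw [wordOf_cons]; exact List.mem_cons_self)
          rw [d.label_eq]; exact hminb1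
        have hpb1 : d.p = d.b1.2 := by
          rw [d.label_eq] at hu
          by_contra hne
          simp [hne] at hu
        have hmB : d.m.2 = C.2 := ih w htail hlab2 d.m d.mem_m hme
        rw [hbb1, ← hpb1]
        exact hmB
      · have hbne1 : b ≠ d.b1 := fun h' =>
          hme (Finset.mem_union_left _ (h' ▸ hbe))
        have hbne2 : b ≠ d.b2 := fun h' =>
          hme (Finset.mem_union_right _ (h' ▸ hbe))
        exact ih w htail hlab2 b (d.mem_of_ne hb hbne1 hbne2) hbe

/-! #### Constructing a merged pointed partition -/

lemma blk_subset {π : PPart A} {b} (hb : b ∈ π.1) : b.1 ⊆ A := by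
  intro a ha
  rw [← π.2.2.2]
  exact Finset.mem_biUnion.2 ⟨b, hb, ha⟩

lemma merged_valid (x : PPart A) {b1 b2 : Finset ℕ × ℕ} (h1 : b1 ∈ x.1) (h2 : b2 ∈ x.1)
    (hne : b1 ≠ b2) {pt : ℕ} (hpt : pt = b1.2 ∨ pt = b2.2) :
    (∀ b ∈ insert (b1.1 ∪ b2.1, pt) ((x.1.erase b1).erase b2), b.2 ∈ b.1) ∧
    (∀ b ∈ insert (b1.1 ∪ b2.1, pt) ((x.1.erase b1).erase b2),
      ∀ b' ∈ insert (b1.1 ∪ b2.1, pt) ((x.1.erase b1).erase b2), b ≠ b' → Disjoint b.1 b'.1) ∧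
    (insert (b1.1 ∪ b2.1, pt) ((x.1.erase b1).erase b2)).biUnion Prod.fst = A := by
  have hold : ∀ b ∈ (x.1.erase b1).erase b2, b ∈ x.1 ∧ b ≠ b1 ∧ b ≠ b2 := by
    intro b hb
    obtain ⟨hb2', hb'⟩ := Finset.mem_erase.1 hb
    obtain ⟨hb1', hbx⟩ := Finset.mem_erase.1 hb'
    exact ⟨hbx, hb1', hb2'⟩
  refine ⟨?_, ?_, ?_⟩
  · intro b hb
    rcases Finset.mem_insert.1 hb with rfl | hb
    · rcases hpt with rfl | rfl
      · exact Finset.mem_union_left _ (x.2.1 _ h1)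
      · exact Finset.mem_union_right _ (x.2.1 _ h2)
    · exact x.2.1 _ (hold b hb).1
  · intro b hb b' hb' hbb
    rcases Finset.mem_insert.1 hb with rfl | hb <;> rcases Finset.mem_insert.1 hb' with h' | hb'
    · exact absurd h'.symm hbb
    · obtain ⟨hbx, hne1, hne2⟩ := hold b' hb'
      exact Finset.disjoint_union_left.2
        ⟨x.2.2.1 b1 h1 b' hbx (fun h => hne1 h.symm), x.2.2.1 b2 h2 b' hbx (fun h => hne2 h.symm)⟩
    · obtain ⟨hbx, hne1, hne2⟩ := hold b hb
      rw [h']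
      exact (Finset.disjoint_union_left.2
        ⟨x.2.2.1 b1 h1 b hbx (fun h => hne1 h.symm), x.2.2.1 b2 h2 b hbx (fun h => hne2 h.symm)⟩).symm
    · exact x.2.2.1 b (hold b hb).1 b' (hold b' hb').1 hbb
  · ext a
    rw [Finset.mem_biUnion]
    constructor
    · rintro ⟨b, hb, hab⟩
      rcases Finset.mem_insert.1 hb with rfl | hb
      · rcases Finset.mem_union.1 hab with h | h
        · exact blk_subset h1 h
        · exact blk_subset h2 h
      · exact blk_subset (hold b hb).1 hab
    · intro ha
      obtain ⟨b, hb, hab⟩ := exists_blk ha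
      by_cases e1 : b = b1
      · exact ⟨_, Finset.mem_insert_self _ _, Finset.mem_union_left _ (e1 ▸ hab)⟩
      by_cases e2 : b = b2
      · exact ⟨_, Finset.mem_insert_self _ _, Finset.mem_union_right _ (e2 ▸ hab)⟩
      · exact ⟨b, Finset.mem_insert_of_mem
          (Finset.mem_erase.2 ⟨e2, Finset.mem_erase.2 ⟨e1, hb⟩⟩), hab⟩

lemma eq_of_no_split {x y : PPart A} (hxy : RefP x y)
    (h : ∀ B ∈ y.1, ∀ b ∈ x.1, b.1 ⊆ B.1 → b.1 = B.1) : x = y := by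
  apply Subtype.ext
  ext b
  constructor
  · intro hb
    obtain ⟨B, hB, hsub⟩ := hxy.1 b hb
    have h1 : b.1 = B.1 := h B hB b hb hsub
    have h2 : b.2 = B.2 := hxy.2 B hB b hb (h1 ▸ y.2.1 B hB)
    have : b = B := Prod.ext h1 h2
    exact this ▸ hB
  · intro hB
    have hB2A : b.2 ∈ A := blk_subset hB (y.2.1 b hB)
    obtain ⟨bx, hbx, hmem⟩ := exists_blk (π := x) hB2A
    obtain ⟨B', hB', hsub⟩ := hxy.1 bx hbx
    have hBB' : B' = b := blk_eq_of_mem hB' hB (hsub hmem) (y.2.1 b hB)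
    have hsub' : bx.1 ⊆ b.1 := hBB' ▸ hsub
    have h1 : bx.1 = b.1 := h b hB bx hbx hsub'
    have h2 : bx.2 = b.2 := hxy.2 b hB bx hbx hmem
    have : bx = b := Prod.ext h1 h2
    exact this ▸ hbx

/-! #### The canonical step -/

lemma canon_step {x y : PPart A} (hxy : RefP x y) (hne : x ≠ y) :
    ∃ z : PPart A, covPP x z ∧ RefP z y ∧ x.1.card = z.1.card + 1 ∧
      (∀ w, covPP x w → RefP w y → w = z ∨ ltLw (labPP x z) (labPP x w)) ∧
      (∀ w', covPP z w' → RefP w' y → ltLw (labPP x z) (labPP z w')) ∧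
      (∀ w rest, covPP x w → IsSatChain covPP w y (w :: rest) → w ≠ z →
        ¬ IncWord ltLw (wordOf labPP (x :: w :: rest))) := by
  classical
  -- the split blocks of `y`
  have hSy : ∀ B ∈ y.1.filter (fun B => ∃ b ∈ x.1, b.1 ⊆ B.1 ∧ b.1 ≠ B.1), B ∈ y.1 :=
    fun B hB => (Finset.mem_filter.1 hB).1
  have hSne : (y.1.filter (fun B => ∃ b ∈ x.1, b.1 ⊆ B.1 ∧ b.1 ≠ B.1)).Nonempty := by
    by_contra hcon
    rw [Finset.not_nonempty_iff_eq_empty] at hcon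
    refine hne (eq_of_no_split hxy ?_)
    intro B hB b hb hsub
    by_contra hneq
    have : B ∈ y.1.filter (fun B => ∃ b ∈ x.1, b.1 ⊆ B.1 ∧ b.1 ≠ B.1) :=
      Finset.mem_filter.2 ⟨hB, b, hb, hsub, hneq⟩
    rw [hcon] at this
    exact absurd this (Finset.notMem_empty B)
  have himgne :
      ((y.1.filter (fun B => ∃ b ∈ x.1, b.1 ⊆ B.1 ∧ b.1 ≠ B.1)).image
        fun B => minB B.1).Nonempty := hSne.image _
  obtain ⟨Bs, hBsS, hBsmin⟩ := Finset.mem_image.1 (minB_mem himgne)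
  have hBs : Bs ∈ y.1 := hSy Bs hBsS
  have haMin : ∀ B ∈ y.1.filter (fun B => ∃ b ∈ x.1, b.1 ⊆ B.1 ∧ b.1 ≠ B.1),
      minB Bs.1 ≤ minB B.1 := by
    intro B hB
    rw [hBsmin]
    exact minB_le (Finset.mem_image_of_mem _ hB)
  have hBsne : Bs.1.Nonempty := blk_nonempty hBs
  have haBs : minB Bs.1 ∈ Bs.1 := minB_mem hBsne
  -- the piece containing the minimum
  obtain ⟨p1, hp1x, hp1a⟩ := exists_blk (π := x) (blk_subset hBs haBs)
  have hp1Bs : p1.1 ⊆ Bs.1 := by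
    obtain ⟨B', hB', hsub⟩ := hxy.1 p1 hp1x
    rwa [blk_eq_of_mem hB' hBs (hsub hp1a) haBs] at hsub
  have hp1min : minB p1.1 = minB Bs.1 :=
    le_antisymm (minB_le hp1a) (minB_le_minB hp1Bs (blk_nonempty hp1x))
  -- the second smallest piece
  have hrestne : (Bs.1 \ p1.1).Nonempty := by
    obtain ⟨hBs', bw, hbw, hbsub, hbneq⟩ := Finset.mem_filter.1 hBsS
    have hp1neq : p1.1 ≠ Bs.1 := by
      intro hcontra
      have hbw2 : bw.2 ∈ p1.1 := by rw [hcontra]; exact hbsub (x.2.1 bw hbw)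
      have : bw = p1 := blk_eq_of_mem hbw hp1x (x.2.1 bw hbw) hbw2
      exact hbneq (this ▸ hcontra)
    obtain ⟨v, hv, hvn⟩ := Finset.exists_of_ssubset
      (ssubset_of_subset_of_ne hp1Bs hp1neq)
    exact ⟨v, Finset.mem_sdiff.2 ⟨hv, hvn⟩⟩
  have ha2mem : minB (Bs.1 \ p1.1) ∈ Bs.1 \ p1.1 := minB_mem hrestne
  have ha2Bs : minB (Bs.1 \ p1.1) ∈ Bs.1 := (Finset.mem_sdiff.1 ha2mem).1
  have ha2np1 : minB (Bs.1 \ p1.1) ∉ p1.1 := (Finset.mem_sdiff.1 ha2mem).2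
  obtain ⟨p2, hp2x, hp2a⟩ := exists_blk (π := x) (blk_subset hBs ha2Bs)
  have hp12 : p1 ≠ p2 := fun h => ha2np1 (h ▸ hp2a)
  have hp2Bs : p2.1 ⊆ Bs.1 := by
    obtain ⟨B', hB', hsub⟩ := hxy.1 p2 hp2x
    rwa [blk_eq_of_mem hB' hBs (hsub hp2a) ha2Bs] at hsub
  have hp2rest : p2.1 ⊆ Bs.1 \ p1.1 := by
    intro v hv
    refine Finset.mem_sdiff.2 ⟨hp2Bs hv, fun hvp1 => ?_⟩
    exact (Finset.disjoint_left.1 (x.2.2.1 p1 hp1x p2 hp2x hp12)) hvp1 hv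
  have hp2min : minB p2.1 = minB (Bs.1 \ p1.1) :=
    le_antisymm (minB_le hp2a) (minB_le_minB hp2rest (blk_nonempty hp2x))
  have haa2 : minB Bs.1 < minB (Bs.1 \ p1.1) :=
    lt_of_le_of_ne (minB_le ha2Bs) (fun h => ha2np1 (h ▸ hp1a))
  have hlt12 : minB p1.1 < minB p2.1 := by rw [hp1min, hp2min]; exact haa2
  -- the canonical merge
  have hptor : (if Bs.2 ∈ p1.1 then p1.2 else p2.2) = p1.2 ∨
      (if Bs.2 ∈ p1.1 then p1.2 else p2.2) = p2.2 := by
    split <;> simp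
  refine ⟨⟨insert (p1.1 ∪ p2.1, if Bs.2 ∈ p1.1 then p1.2 else p2.2)
    ((x.1.erase p1).erase p2), merged_valid x hp1x hp2x hp12 hptor⟩, ?_⟩
  set z : PPart A := ⟨insert (p1.1 ∪ p2.1, if Bs.2 ∈ p1.1 then p1.2 else p2.2)
    ((x.1.erase p1).erase p2), merged_valid x hp1x hp2x hp12 hptor⟩ with hzdef
  have heqz : z.1 = insert (p1.1 ∪ p2.1, if Bs.2 ∈ p1.1 then p1.2 else p2.2)
      ((x.1.erase p1).erase p2) := rfl
  have hcov : covPP x z := ⟨p1, hp1x, p2, hp2x, hlt12, _, hptor, heqz⟩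
  have hlabz : labPP x z =
      (minB Bs.1, minB (Bs.1 \ p1.1), if Bs.2 ∈ p1.1 then true else false) := by
    rw [cov_label_eq hp1x hp2x hlt12 hptor heqz, hp1min, hp2min]
    refine congrArg _ (congrArg _ ?_)
    by_cases hin : Bs.2 ∈ p1.1
    · rw [if_pos hin, if_pos hin, if_pos rfl]
    · rw [if_neg hin, if_neg hin, if_neg]
      exact pt_ne hp2x hp1x (Ne.symm hp12)
  have hzmem : ∀ b ∈ z.1,
      b = (p1.1 ∪ p2.1, if Bs.2 ∈ p1.1 then p1.2 else p2.2) ∨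
      (b ∈ x.1 ∧ b ≠ p1 ∧ b ≠ p2) :=
    fun b hb => cov_mem_or hp1x hp2x hlt12 hptor heqz hb
  have hrefz : RefP z y := by
    constructor
    · intro b hb
      rcases hzmem b hb with rfl | ⟨hbx, _, _⟩
      · exact ⟨Bs, hBs, Finset.union_subset hp1Bs hp2Bs⟩
      · exact hxy.1 b hbx
    · intro B hB b hb hmem
      rcases hzmem b hb with rfl | ⟨hbx, _, _⟩
      · have hBBs : B = Bs := by
          refine blk_eq_of_mem hB hBs (y.2.1 B hB) ?_
          rcases Finset.mem_union.1 hmem with h | h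
          · exact hp1Bs h
          · exact hp2Bs h
        subst hBBs
        show (if B.2 ∈ p1.1 then p1.2 else p2.2) = B.2
        by_cases hin : B.2 ∈ p1.1
        · rw [if_pos hin]
          exact hxy.2 B hB p1 hp1x hin
        · rw [if_neg hin]
          have hmem2 : B.2 ∈ p2.1 := by
            rcases Finset.mem_union.1 hmem with h | h
            · exact absurd h hin
            · exact h
          exact hxy.2 B hB p2 hp2x hmem2
      · exact hxy.2 B hB b hbx hmem
  -- membership in the split set
  have hmemS : ∀ C ∈ y.1, ∀ bx ∈ x.1, bx.1 ⊆ C.1 → ∀ v, v ∈ C.1 → v ∉ bx.1 →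
      C ∈ y.1.filter (fun B => ∃ b ∈ x.1, b.1 ⊆ B.1 ∧ b.1 ≠ B.1) := by
    intro C hC bx hbx hsub v hv hvn
    exact Finset.mem_filter.2 ⟨hC, bx, hbx, hsub, fun h => hvn (h ▸ hv)⟩
  refine ⟨hcov, hrefz, cov_card_eq hp1x hp2x hlt12 hptor heqz, ?_, ?_, ?_⟩
  · -- minimality among covers of `x` below `y`
    intro w hcovw hrefw
    obtain ⟨b1, hb1x, b2, hb2x, hltw, pw, hpw, heqw⟩ := hcovw
    have hlabw : labPP x w = (minB b1.1, minB b2.1, if pw = b1.2 then true else false) :=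
      cov_label_eq hb1x hb2x hltw hpw heqw
    obtain ⟨C, hC, hsubC⟩ := hrefw.1 (b1.1 ∪ b2.1, pw) (cov_mem_m hb1x hb2x hltw hpw heqw)
    have hb1C : b1.1 ⊆ C.1 := (Finset.subset_union_left).trans hsubC
    have hb2C : b2.1 ⊆ C.1 := (Finset.subset_union_right).trans hsubC
    have hb12 : b1 ≠ b2 := fun h => absurd (congrArg (fun b => minB b.1) h) (ne_of_lt hltw)
    have hdisj : Disjoint b1.1 b2.1 := x.2.2.1 b1 hb1x b2 hb2x hb12
    have hCS : C ∈ y.1.filter (fun B => ∃ b ∈ x.1, b.1 ⊆ B.1 ∧ b.1 ≠ B.1) :=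
      hmemS C hC b1 hb1x hb1C b2.2 (hb2C (x.2.1 b2 hb2x))
        (fun hmm => (Finset.disjoint_left.1 hdisj hmm) (x.2.1 b2 hb2x))
    have haleb1 : minB Bs.1 ≤ minB b1.1 :=
      le_trans (haMin C hCS) (minB_le_minB hb1C (blk_nonempty hb1x))
    by_cases hb1a : minB b1.1 = minB Bs.1
    · -- the cover involves the piece of the minimum
      have hb1p1 : b1 = p1 := blk_eq_of_mem hb1x hp1x
        (by rw [← hb1a]; exact minB_mem (blk_nonempty hb1x)) hp1a
      have hCBs : C = Bs := blk_eq_of_mem hC hBs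
        (hb1C (by rw [hb1p1]; exact hp1a)) haBs
      have hb2Bs : b2.1 ⊆ Bs.1 := hCBs ▸ hb2C
      have hp1b2 : p1 ≠ b2 := by rw [← hb1p1]; exact hb12
      have hb2rest : b2.1 ⊆ Bs.1 \ p1.1 := by
        intro v hv
        refine Finset.mem_sdiff.2 ⟨hb2Bs hv, fun hvp1 => ?_⟩
        exact (Finset.disjoint_left.1 (x.2.2.1 p1 hp1x b2 hb2x hp1b2)) hvp1 hv
      have hm2 : minB (Bs.1 \ p1.1) ≤ minB b2.1 :=
        minB_le_minB hb2rest (blk_nonempty hb2x)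
      by_cases hu1 : Bs.2 ∈ p1.1
      · -- the canonical first step keeps the point of the first piece
        have hwu : pw = b1.2 := by
          by_contra hcon
          have hpw2 : pw = b2.2 := hpw.resolve_left hcon
          have hmm : Bs.2 ∈ b1.1 ∪ b2.1 :=
            Finset.mem_union_left _ (by rw [hb1p1]; exact hu1)
          have hptw : pw = Bs.2 :=
            hrefw.2 Bs hBs _ (cov_mem_m hb1x hb2x hltw hpw heqw) hmm
          have hBs2b2 : Bs.2 ∈ b2.1 := by
            rw [← hptw, hpw2]; exact x.2.1 b2 hb2x
          exact (Finset.disjoint_left.1 (x.2.2.1 p1 hp1x b2 hb2x hp1b2)) hu1 hBs2b2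
        by_cases hm2e : minB b2.1 = minB (Bs.1 \ p1.1)
        · -- this is the canonical step
          have hb2p2 : b2 = p2 := blk_eq_of_mem hb2x hp2x
            (by rw [← hm2e]; exact minB_mem (blk_nonempty hb2x)) hp2a
          left
          apply Subtype.ext
          rw [heqw, heqz]
          subst hb1p1; subst hb2p2
          rw [hwu, if_pos hu1]
        · right
          rw [hlabz, hlabw]
          refine Or.inr ⟨hb1a.symm, hm2, ?_, ?_⟩
          · rw [if_pos hu1, if_pos hwu]
          · intro hcon
            rw [Prod.mk.injEq] at hcon
            exact hm2e hcon.1.symm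
      · -- the canonical first step takes the point of the second piece
        by_cases hm2e : minB b2.1 = minB (Bs.1 \ p1.1)
        · have hb2p2 : b2 = p2 := blk_eq_of_mem hb2x hp2x
            (by rw [← hm2e]; exact minB_mem (blk_nonempty hb2x)) hp2a
          by_cases hwu : pw = b1.2
          · right
            rw [hlabz, hlabw]
            refine Or.inr ⟨hb1a.symm, le_of_eq hm2e.symm, ?_, ?_⟩
            · rw [if_neg hu1]; exact Bool.false_le _
            · intro hcon
              rw [Prod.mk.injEq] at hcon
              rw [if_neg hu1, if_pos hwu] at hcon
              exact Bool.false_ne_true hcon.2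
          · left
            apply Subtype.ext
            rw [heqw, heqz]
            subst hb1p1; subst hb2p2
            rw [hpw.resolve_left hwu, if_neg hu1]
        · right
          rw [hlabz, hlabw]
          refine Or.inr ⟨hb1a.symm, hm2, ?_, ?_⟩
          · rw [if_neg hu1]; exact Bool.false_le _
          · intro hcon
            rw [Prod.mk.injEq] at hcon
            exact hm2e hcon.1.symm
    · right
      rw [hlabz, hlabw]
      exact Or.inl (lt_of_le_of_ne haleb1 (Ne.symm hb1a))
  · -- minimality among covers of `z` below `y`
    intro w' hcovw hrefw
    obtain ⟨b1, hb1z, b2, hb2z, hltw, pw, hpw, heqw⟩ := hcovw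
    have hlabw : labPP z w' = (minB b1.1, minB b2.1, if pw = b1.2 then true else false) :=
      cov_label_eq hb1z hb2z hltw hpw heqw
    obtain ⟨C, hC, hsubC⟩ := hrefw.1 (b1.1 ∪ b2.1, pw) (cov_mem_m hb1z hb2z hltw hpw heqw)
    have hb1C : b1.1 ⊆ C.1 := (Finset.subset_union_left).trans hsubC
    have hb2C : b2.1 ⊆ C.1 := (Finset.subset_union_right).trans hsubC
    have hb12 : b1 ≠ b2 := fun h => absurd (congrArg (fun b => minB b.1) h) (ne_of_lt hltw)
    have hdisjz : Disjoint b1.1 b2.1 := z.2.2.1 b1 hb1z b2 hb2z hb12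
    have hxin : ∀ b ∈ z.1, ∃ bx ∈ x.1, bx.1 ⊆ b.1 := by
      intro b hb
      rcases hzmem b hb with rfl | ⟨hbx, _, _⟩
      · exact ⟨p1, hp1x, Finset.subset_union_left⟩
      · exact ⟨b, hbx, Finset.Subset.refl _⟩
    obtain ⟨bx, hbx, hbxb1⟩ := hxin b1 hb1z
    have hCS : C ∈ y.1.filter (fun B => ∃ b ∈ x.1, b.1 ⊆ B.1 ∧ b.1 ≠ B.1) :=
      hmemS C hC bx hbx (hbxb1.trans hb1C) b2.2 (hb2C (z.2.1 b2 hb2z))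
        (fun hmm => (Finset.disjoint_left.1 hdisjz (hbxb1 hmm)) (z.2.1 b2 hb2z))
    have haleb1 : minB Bs.1 ≤ minB b1.1 :=
      le_trans (haMin C hCS) (minB_le_minB hb1C (blk_nonempty hb1z))
    rw [hlabz, hlabw]
    by_cases hb1a : minB b1.1 = minB Bs.1
    · have haO : minB Bs.1 ∈ b1.1 := by rw [← hb1a]; exact minB_mem (blk_nonempty hb1z)
      have hmem_mz : (p1.1 ∪ p2.1, if Bs.2 ∈ p1.1 then p1.2 else p2.2) ∈ z.1 :=
        cov_mem_m hp1x hp2x hlt12 hptor heqz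
      have hb1m : b1 = (p1.1 ∪ p2.1, if Bs.2 ∈ p1.1 then p1.2 else p2.2) :=
        blk_eq_of_mem hb1z hmem_mz haO (Finset.mem_union_left _ hp1a)
      have hCBs : C = Bs := blk_eq_of_mem hC hBs (hb1C haO) haBs
      have hb2Bs : b2.1 ⊆ Bs.1 := hCBs ▸ hb2C
      have hb2x' : b2 ∈ x.1 ∧ b2 ≠ p1 ∧ b2 ≠ p2 := by
        rcases hzmem b2 hb2z with heq2 | h
        · exact absurd (hb1m.trans heq2.symm) hb12
        · exact h
      have hb2rest : b2.1 ⊆ Bs.1 \ p1.1 := by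
        intro v hv
        refine Finset.mem_sdiff.2 ⟨hb2Bs hv, fun hvp1 => ?_⟩
        exact (Finset.disjoint_left.1
          (x.2.2.1 p1 hp1x b2 hb2x'.1 (Ne.symm hb2x'.2.1))) hvp1 hv
      have hm2 : minB (Bs.1 \ p1.1) ≤ minB b2.1 :=
        minB_le_minB hb2rest (blk_nonempty hb2z)
      have hm2ne : minB b2.1 ≠ minB (Bs.1 \ p1.1) := by
        intro h
        exact hb2x'.2.2 (blk_eq_of_mem hb2x'.1 hp2x
          (by rw [← h]; exact minB_mem (blk_nonempty hb2z)) hp2a)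
      have hu : (if Bs.2 ∈ p1.1 then true else false) ≤ (if pw = b1.2 then true else false) := by
        by_cases hu1 : Bs.2 ∈ p1.1
        · have hwu : pw = b1.2 := by
            by_contra hcon
            have hpw2 : pw = b2.2 := hpw.resolve_left hcon
            have hmm : Bs.2 ∈ b1.1 ∪ b2.1 :=
              Finset.mem_union_left _ (by rw [hb1m]; exact Finset.mem_union_left _ hu1)
            have hptw : pw = Bs.2 :=
              hrefw.2 Bs hBs _ (cov_mem_m hb1z hb2z hltw hpw heqw) hmm
            have hBs2b2 : Bs.2 ∈ b2.1 := by rw [← hptw, hpw2]; exact z.2.1 b2 hb2z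
            exact (Finset.disjoint_left.1
              (x.2.2.1 p1 hp1x b2 hb2x'.1 (Ne.symm hb2x'.2.1))) hu1 hBs2b2
          rw [if_pos hu1, if_pos hwu]
        · rw [if_neg hu1]; exact Bool.false_le _
      exact Or.inr ⟨hb1a.symm, hm2, hu, fun hcon =>
        hm2ne (by rw [Prod.mk.injEq] at hcon; exact hcon.1.symm)⟩
    · exact Or.inl (lt_of_le_of_ne haleb1 (Ne.symm hb1a))
  · -- no increasing chain can start with a non-canonical step
    intro w rest hcovw hsat hwz hInc
    obtain ⟨b1, hb1x, b2, hb2x, hltw, pw, hpw, heqw⟩ := hcovw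
    have hrefw : RefP w y := refP_of_sat _ _ hsat
    have hlabw : labPP x w = (minB b1.1, minB b2.1, if pw = b1.2 then true else false) :=
      cov_label_eq hb1x hb2x hltw hpw heqw
    have hInc' : List.Chain' ltLw (labPP x w :: wordOf labPP (w :: rest)) := hInc
    have hpair := List.isChain_iff_pairwise.1 hInc'
    obtain ⟨hhead, -⟩ := List.pairwise_cons.1 hpair
    obtain ⟨C, hC, hsubC⟩ := hrefw.1 (b1.1 ∪ b2.1, pw) (cov_mem_m hb1x hb2x hltw hpw heqw)
    have hb1C : b1.1 ⊆ C.1 := (Finset.subset_union_left).trans hsubC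
    have hb2C : b2.1 ⊆ C.1 := (Finset.subset_union_right).trans hsubC
    have hb12 : b1 ≠ b2 := fun h => absurd (congrArg (fun b => minB b.1) h) (ne_of_lt hltw)
    have hdisj : Disjoint b1.1 b2.1 := x.2.2.1 b1 hb1x b2 hb2x hb12
    have hCS : C ∈ y.1.filter (fun B => ∃ b ∈ x.1, b.1 ⊆ B.1 ∧ b.1 ≠ B.1) :=
      hmemS C hC b1 hb1x hb1C b2.2 (hb2C (x.2.1 b2 hb2x))
        (fun hmm => (Finset.disjoint_left.1 hdisj hmm) (x.2.1 b2 hb2x))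
    have haleb1 : minB Bs.1 ≤ minB b1.1 :=
      le_trans (haMin C hCS) (minB_le_minB hb1C (blk_nonempty hb1x))
    by_cases hb1a : minB b1.1 = minB Bs.1
    · -- the first step merges the piece of the minimum with some piece of `Bs`
      have hb1p1 : b1 = p1 := blk_eq_of_mem hb1x hp1x
        (by rw [← hb1a]; exact minB_mem (blk_nonempty hb1x)) hp1a
      have hCBs : C = Bs := blk_eq_of_mem hC hBs
        (hb1C (by rw [hb1p1]; exact hp1a)) haBs
      have hb2Bs : b2.1 ⊆ Bs.1 := hCBs ▸ hb2C
      have hp1b2 : p1 ≠ b2 := by rw [← hb1p1]; exact hb12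
      have hb2rest : b2.1 ⊆ Bs.1 \ p1.1 := by
        intro v hv
        refine Finset.mem_sdiff.2 ⟨hb2Bs hv, fun hvp1 => ?_⟩
        exact (Finset.disjoint_left.1 (x.2.2.1 p1 hp1x b2 hb2x hp1b2)) hvp1 hv
      have hm2 : minB (Bs.1 \ p1.1) ≤ minB b2.1 :=
        minB_le_minB hb2rest (blk_nonempty hb2x)
      by_cases hm2e : minB b2.1 = minB (Bs.1 \ p1.1)
      · -- the merged pieces are the canonical ones, only the pointing differs
        have hb2p2 : b2 = p2 := blk_eq_of_mem hb2x hp2x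
          (by rw [← hm2e]; exact minB_mem (blk_nonempty hb2x)) hp2a
        by_cases hu1 : Bs.2 ∈ p1.1
        · -- then the pointing is forced as well, so `w = z`
          have hwu : pw = b1.2 := by
            by_contra hcon
            have hpw2 : pw = b2.2 := hpw.resolve_left hcon
            have hmm : Bs.2 ∈ b1.1 ∪ b2.1 :=
              Finset.mem_union_left _ (by rw [hb1p1]; exact hu1)
            have hptw : pw = Bs.2 :=
              hrefw.2 Bs hBs _ (cov_mem_m hb1x hb2x hltw hpw heqw) hmm
            have hBs2b2 : Bs.2 ∈ b2.1 := by
              rw [← hptw, hpw2]; exact x.2.1 b2 hb2x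
            exact (Finset.disjoint_left.1 (x.2.2.1 p1 hp1x b2 hb2x hp1b2)) hu1 hBs2b2
          refine hwz (Subtype.ext ?_)
          rw [heqw, heqz]
          subst hb1p1; subst hb2p2
          rw [hwu, if_pos hu1]
        · by_cases hwu : pw = b1.2
          · -- the first label is `(a*, a₂, 1)`: all labels at `a*` keep the point,
            -- contradicting that the point of `Bs` is not in the first piece
            have hlabw' : labPP x w = (minB b1.1, minB b2.1, true) := by
              rw [hlabw, if_pos hwu]
            have hfull : IsSatChain covPP x y (x :: w :: rest) := by
              refine ⟨List.isChain_cons_cons.2 ⟨⟨b1, hb1x, b2, hb2x, hltw, pw, hpw, heqw⟩, hsat.1⟩,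
                rfl, ?_⟩
              rw [List.getLast?_cons_cons]
              exact hsat.2.2
            have hall : ∀ ℓ ∈ wordOf labPP (x :: w :: rest), ℓ.1 = minB Bs.1 → ℓ.2.2 = true := by
              intro ℓ hℓ hℓ1
              rw [wordOf_cons] at hℓ
              rcases List.mem_cons.1 hℓ with rfl | hℓ
              · rw [hlabw']
              · have hlt := hhead ℓ hℓ
                rw [hlabw'] at hlt
                rcases hlt with h | ⟨-, -, hu, -⟩
                · have h' : minB b1.1 < ℓ.1 := h
                  rw [hℓ1, hb1a] at h'
                  exact absurd h' (lt_irrefl _)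
                · have hu' : true ≤ ℓ.2.2 := hu
                  exact (le_antisymm hu' (Bool.le_true _)).symm
            have hptk := point_track hBs rfl (x :: w :: rest) x hfull hall p1 hp1x hp1a
            exact hu1 (by rw [← hptk]; exact x.2.1 p1 hp1x)
          · have hpw2 : pw = b2.2 := hpw.resolve_left hwu
            refine hwz (Subtype.ext ?_)
            rw [heqw, heqz]
            subst hb1p1; subst hb2p2
            rw [hpw2, if_neg hu1]
      · -- the second piece is not canonical: a smaller label must occur later
        have hp2b1 : p2 ≠ b1 := fun h => hp12 ((h.trans hb1p1).symm)
        have hp2b2 : p2 ≠ b2 := fun h => hm2e (by rw [← h, hp2min])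
        have hp2w : p2 ∈ w.1 := cov_mem_of_ne hb1x hb2x hltw hpw heqw hp2x hp2b1 hp2b2
        have hsepw : ∀ b ∈ w.1, ¬(minB Bs.1 ∈ b.1 ∧ minB (Bs.1 \ p1.1) ∈ b.1) := by
          rintro b hb ⟨h1, h2⟩
          have hbp2 : b = p2 := blk_eq_of_mem hb hp2w h2 hp2a
          have hminle : minB p2.1 ≤ minB Bs.1 := minB_le (hbp2 ▸ h1)
          rw [hp2min] at hminle
          omega
        obtain ⟨ℓ, hℓ, hℓ1, hℓ2⟩ :=
          future_label hBs ha2Bs rfl (w :: rest) w hsat hsepw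
        have hlt := hhead ℓ hℓ
        rw [hlabw] at hlt
        rcases hlt with h | ⟨h, h2, -, -⟩
        · have h' : minB b1.1 < ℓ.1 := h
          rw [hℓ1, hb1a] at h'
          exact absurd h' (lt_irrefl _)
        · have h2' : minB b2.1 ≤ ℓ.2.1 := h2
          omega
    · -- the first label has too large a first coordinate
      have hp1b1 : p1 ≠ b1 := fun h => hb1a (by rw [← h, hp1min])
      have hp1b2 : p1 ≠ b2 := by
        intro h
        have h2 : minB b2.1 = minB Bs.1 := by rw [← h, hp1min]
        omega
      have hp1w : p1 ∈ w.1 := cov_mem_of_ne hb1x hb2x hltw hpw heqw hp1x hp1b1 hp1b2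
      have hsepw : ∀ b ∈ w.1, ¬(minB Bs.1 ∈ b.1 ∧ minB (Bs.1 \ p1.1) ∈ b.1) := by
        rintro b hb ⟨h1, h2⟩
        have : b = p1 := blk_eq_of_mem hb hp1w h1 hp1a
        exact ha2np1 (this ▸ h2)
      obtain ⟨ℓ, hℓ, hℓ1, hℓ2⟩ :=
        future_label hBs ha2Bs rfl (w :: rest) w hsat hsepw
      have hlt := hhead ℓ hℓ
      rw [hlabw] at hlt
      rcases hlt with h | ⟨h, -, -, -⟩
      · have h' : minB b1.1 < ℓ.1 := h
        rw [hℓ1] at h'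
        omega
      · have h' : minB b1.1 = ℓ.1 := h
        rw [hℓ1] at h'
        exact hb1a h'

/-! #### The main induction -/

lemma refP_of_leOf {x y : PPart A} (h : leOf covPP x y) : RefP x y := by
  induction h using Relation.ReflTransGen.head_induction_on with
  | refl => exact refP_refl _
  | head hcov _ ih => exact refP_cov (covPP_iff.1 hcov).some ih

lemma main_eq (y : PPart A) :
    ∃ c, (IsSatChain covPP y y c ∧ IncWord ltLw (wordOf labPP c)) ∧
      ∀ c', IsSatChain covPP y y c' → c' ≠ c →
        ¬ IncWord ltLw (wordOf labPP c') ∧ List.Lex ltLw (wordOf labPP c) (wordOf labPP c') := by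
  refine ⟨[y], ⟨⟨List.isChain_singleton _, rfl, rfl⟩, List.isChain_nil⟩, ?_⟩
  intro c' hc' hne
  exfalso
  rcases isSatChain_cases hc' with ⟨hc, -⟩ | ⟨w, rest, hc, hcov, htail⟩
  · exact hne hc
  · have h1 := card_le_of_sat _ _ htail
    have h2 := (covPP_iff.1 hcov).some.card_eq
    omega

lemma main_induction : ∀ (k : ℕ) (x y : PPart A), x.1.card ≤ k → RefP x y →
    ∃ c, (IsSatChain covPP x y c ∧ IncWord ltLw (wordOf labPP c)) ∧
      ∀ c', IsSatChain covPP x y c' → c' ≠ c →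
        ¬ IncWord ltLw (wordOf labPP c') ∧
          List.Lex ltLw (wordOf labPP c) (wordOf labPP c') := by
  intro k
  induction k with
  | zero =>
    intro x y hcard hxy
    have hx0 : x.1 = ∅ := Finset.card_eq_zero.1 (le_antisymm hcard (Nat.zero_le _))
    have hA : A = ∅ := by rw [← x.2.2.2, hx0]; simp
    have hy0 : y.1 = ∅ := by
      by_contra hcon
      obtain ⟨B, hB⟩ := Finset.nonempty_iff_ne_empty.2 hcon
      have := blk_subset hB (y.2.1 B hB)
      rw [hA] at this
      exact absurd this (Finset.notMem_empty _)
    have hxy' : x = y := Subtype.ext (hx0.trans hy0.symm)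
    subst hxy'
    exact main_eq x
  | succ k ih =>
    intro x y hcard hxy
    by_cases hxe : x = y
    · subst hxe
      exact main_eq x
    · obtain ⟨z, hcovz, hrefz, hcardz, hM1, hM2, hU⟩ := canon_step hxy hxe
      obtain ⟨c₀, ⟨hsat₀, hinc₀⟩, huniq₀⟩ := ih z y (by omega) hrefz
      obtain ⟨z', tail₀, rfl⟩ : ∃ z' tail₀, c₀ = z' :: tail₀ := by
        cases c₀ with
        | nil => exact absurd hsat₀.2.1 (by simp)
        | cons a t => exact ⟨a, t, rfl⟩
      obtain rfl : z = z' := ((by simpa using hsat₀.2.1 : z' = z)).symm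
      have hsatc : IsSatChain covPP x y (x :: z :: tail₀) := by
        refine ⟨List.isChain_cons_cons.2 ⟨hcovz, hsat₀.1⟩, rfl, ?_⟩
        rw [List.getLast?_cons_cons]
        exact hsat₀.2.2
      have hincc : IncWord ltLw (wordOf labPP (x :: z :: tail₀)) := by
        rcases isSatChain_cases hsat₀ with ⟨hc0, -⟩ | ⟨z₁, rest1, hceq, hcov1, htail1⟩
        · have ht0 : tail₀ = [] := by injection hc0
          subst ht0
          exact List.isChain_singleton _
        · have ht0 : tail₀ = z₁ :: rest1 := by injection hceq
          subst ht0
          rw [wordOf_cons, wordOf_cons]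
          exact List.isChain_cons_cons.2 ⟨hM2 z₁ hcov1 (refP_of_sat _ _ htail1), hinc₀⟩
      refine ⟨x :: z :: tail₀, ⟨hsatc, hincc⟩, ?_⟩
      intro c' hsatc' hnec'
      rcases isSatChain_cases hsatc' with ⟨hceq', heq2⟩ | ⟨w, restw, hceq', hcovw, htailw⟩
      · exact absurd heq2 hxe
      · subst hceq'
        by_cases hwzeq : w = z
        · have htz : IsSatChain covPP z y (z :: restw) := by
            rw [hwzeq] at htailw; exact htailw
          by_cases hrest : (z :: restw) = (z :: tail₀)
          · exfalso
            have hre : restw = tail₀ := by injection hrest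
            exact hnec' (by rw [hwzeq, hre])
          · obtain ⟨hninc, hlex⟩ := huniq₀ (z :: restw) htz hrest
            constructor
            · intro hincc'
              apply hninc
              have h2 : List.Chain' ltLw (wordOf labPP (w :: restw)) :=
                (show List.Chain' ltLw
                  (labPP x w :: wordOf labPP (w :: restw)) from hincc').tail
              rw [hwzeq] at h2
              exact h2
            · show List.Lex ltLw (wordOf labPP (x :: z :: tail₀))
                (wordOf labPP (x :: w :: restw))
              rw [hwzeq, wordOf_cons, wordOf_cons]
              exact List.Lex.cons hlex
        · refine ⟨hU w restw hcovw htailw hwzeq, ?_⟩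
          rcases hM1 w hcovw (refP_of_sat _ _ htailw) with heqwz | hlt
          · exact absurd heqwz hwzeq
          · rw [wordOf_cons, wordOf_cons]
            exact List.Lex.rel hlt

end EL6
/-- The labeling `λ•₂`, which has the same labels as `λ•` but with the
labels ordered in the poset `Λₙʷ`, is an EL-labeling of the pointed partition poset
`Πₙ•`. -/
theorem pointed_lambda2_is_EL (n : ℕ) :
    IsELLabeling (covPP (A := Finset.Icc 1 n)) (labPP (A := Finset.Icc 1 n)) ltLw := by
  intro x y hxy
  exact main_induction x.1.card x y (le_refl _) (refP_of_leOf hxy)
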